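/- For all ℓ ≥ 5, the complete 3-uniform hypergraph K_ℓ^{(3)} is aggressively Berge-K_{1,ℓ}-saturated. -/

import Mathlib

open Finset

variable {V : Type} [DecidableEq V]

/-- A hypergraph (given by its edge set) is 3-uniform. -/
def Uniform3 (E : Finset (Finset V)) : Prop := ∀ e ∈ E, e.card = 3

/-- There is a Berge star `K_{1,m}` centered at `v`: `m` distinct leaves `y i`
and `m` distinct hyperedges `f i` with `{v, y i} ⊆ f i`. -/
def IsBergeStar (E : Finset (Finset V)) (v : V) (m : ℕ) : Prop :=
  ∃ (y : Fin m → V) (f : Fin m → Finset V),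
    Function.Injective y ∧ Function.Injective f ∧
    ∀ i, f i ∈ E ∧ v ∈ f i ∧ y i ∈ f i ∧ y i ≠ v

/-- The Berge degree of `v`: the largest `m` such that a Berge star `K_{1,m}`
centered at `v` exists. -/
noncomputable def bergeDeg (E : Finset (Finset V)) (v : V) : ℕ :=
  sSup {m | IsBergeStar E v m}

/-- The degree of `v`: the number of hyperedges containing `v`. -/
def hdeg (E : Finset (Finset V)) (v : V) : ℕ := (E.filter (fun e => v ∈ e)).card

/-- The neighborhood of `v`: vertices sharing an edge with `v`. -/
def nbr (E : Finset (Finset V)) (v : V) : Finset V :=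
  ((E.filter (fun e => v ∈ e)).biUnion id).erase v

/-- `E` contains no Berge star `K_{1,ℓ}`. -/
def BergeFree (E : Finset (Finset V)) (ℓ : ℕ) : Prop := ∀ v, ¬ IsBergeStar E v ℓ

/-- `E` is Berge-`K_{1,ℓ}`-saturated. -/
def Saturated3 (E : Finset (Finset V)) (ℓ : ℕ) : Prop :=
  BergeFree E ℓ ∧
  ∀ e : Finset V, e.card = 3 → e ∉ E → ∃ w, IsBergeStar (insert e E) w ℓ

/-- The disjoint union of two hypergraphs. -/
def sumEdges {W : Type} [DecidableEq W]
    (E : Finset (Finset V)) (F : Finset (Finset W)) : Finset (Finset (V ⊕ W)) :=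
  E.image (fun e => e.map ⟨Sum.inl, Sum.inl_injective⟩) ∪
  F.image (fun e => e.map ⟨Sum.inr, Sum.inr_injective⟩)

/-- `E` is aggressively Berge-`K_{1,ℓ}`-saturated: its disjoint union with any
Berge-`K_{1,ℓ}`-saturated 3-graph is Berge-`K_{1,ℓ}`-saturated. -/
def Aggressive (E : Finset (Finset V)) (ℓ : ℕ) : Prop :=
  ∀ (W : Type) [Fintype W] [DecidableEq W] (F : Finset (Finset W)),
    Uniform3 F → Saturated3 F ℓ → Saturated3 (sumEdges E F) ℓ

/-- The complete 3-uniform hypergraph `K_ℓ^{(3)}`: all 3-element subsets of `Fin ℓ`. -/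
def completeEdges (ℓ : ℕ) : Finset (Finset (Fin ℓ)) :=
  Finset.powersetCard 3 Finset.univ

lemma star_mono {E E' : Finset (Finset V)} (h : E ⊆ E') {v : V} {m : ℕ}
    (hs : IsBergeStar E v m) : IsBergeStar E' v m := by
  obtain ⟨y, f, hy, hf, hc⟩ := hs
  exact ⟨y, f, hy, hf, fun i => ⟨h (hc i).1, (hc i).2⟩⟩

lemma star_map {W : Type} [DecidableEq W] (emb : V ↪ W) {E : Finset (Finset V)} {v : V} {m : ℕ}
    (hs : IsBergeStar E v m) :
    IsBergeStar (E.image (fun e => e.map emb)) (emb v) m := by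
  obtain ⟨y, f, hy, hf, hc⟩ := hs
  refine ⟨fun i => emb (y i), fun i => (f i).map emb, fun i j hij => hy (emb.injective hij),
    fun i j hij => hf (Finset.map_injective emb hij), fun i => ?_⟩
  obtain ⟨h1, h2, h3, h4⟩ := hc i
  exact ⟨Finset.mem_image_of_mem _ h1, Finset.mem_map_of_mem _ h2, Finset.mem_map_of_mem _ h3,
    fun h => h4 (emb.injective h)⟩

lemma star_extend {E : Finset (Finset V)} {v u : V} {e : Finset V} {m : ℕ}
    (hs : IsBergeStar E v m) (hu : ∀ g ∈ E, u ∉ g) (hue : u ∈ e) (hve : v ∈ e)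
    (huv : u ≠ v) : IsBergeStar (insert e E) v (m + 1) := by
  obtain ⟨y, f, hy, hf, hc⟩ := hs
  have key : ∀ i : Fin m, y i ≠ u ∧ f i ≠ e := by
    intro i
    refine ⟨fun h => hu _ (hc i).1 (h ▸ (hc i).2.2.1), fun h => hu _ (hc i).1 ?_⟩
    rw [h]; exact hue
  refine ⟨Fin.snoc y u, Fin.snoc f e, ?_, ?_, ?_⟩
  · intro i j hij
    rcases Fin.eq_castSucc_or_eq_last i with ⟨i', rfl⟩ | rfl <;>
      rcases Fin.eq_castSucc_or_eq_last j with ⟨j', rfl⟩ | rfl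
    · simp only [Fin.snoc_castSucc] at hij
      exact congrArg Fin.castSucc (hy hij)
    · simp only [Fin.snoc_castSucc, Fin.snoc_last] at hij
      exact absurd hij (key i').1
    · simp only [Fin.snoc_castSucc, Fin.snoc_last] at hij
      exact absurd hij.symm (key j').1
    · rfl
  · intro i j hij
    rcases Fin.eq_castSucc_or_eq_last i with ⟨i', rfl⟩ | rfl <;>
      rcases Fin.eq_castSucc_or_eq_last j with ⟨j', rfl⟩ | rfl
    · simp only [Fin.snoc_castSucc] at hij
      exact congrArg Fin.castSucc (hf hij)
    · simp only [Fin.snoc_castSucc, Fin.snoc_last] at hij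
      exact absurd hij (key i').2
    · simp only [Fin.snoc_castSucc, Fin.snoc_last] at hij
      exact absurd hij.symm (key j').2
    · rfl
  · intro i
    rcases Fin.eq_castSucc_or_eq_last i with ⟨i', rfl⟩ | rfl
    · obtain ⟨h1, h2, h3, h4⟩ := hc i'
      simp only [Fin.snoc_castSucc]
      exact ⟨Finset.mem_insert_of_mem h1, h2, h3, h4⟩
    · simp only [Fin.snoc_last]
      exact ⟨Finset.mem_insert_self _ _, hve, hue, huv⟩

lemma no_star_full {n : ℕ} (E : Finset (Finset (Fin n))) (a : Fin n) :
    ¬ IsBergeStar E a n := by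
  rintro ⟨y, f, hy, hf, hc⟩
  obtain ⟨i, hi⟩ := Finite.injective_iff_surjective.mp hy a
  exact (hc i).2.2.2 hi

lemma mod_succ_helper {n a b : ℕ} (hn : 4 ≤ n) (ha : a < n) (hb : b < n)
    (h1 : a = (b + 1) % n) (h2 : b = (a + 1) % n) : False := by
  rcases lt_or_ge (b + 1) n with h | h
  · rw [Nat.mod_eq_of_lt h] at h1
    rcases lt_or_ge (a + 1) n with h' | h'
    · rw [Nat.mod_eq_of_lt h'] at h2; omega
    · have hh : a + 1 = n := by omega
      rw [hh, Nat.mod_self] at h2; omega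
  · have hh : b + 1 = n := by omega
    rw [hh, Nat.mod_self] at h1
    subst h1
    rw [Nat.mod_eq_of_lt (by omega : 0 + 1 < n)] at h2
    omega

lemma star_complete {n : ℕ} (hn : 4 ≤ n) (a : Fin (n + 1)) :
    IsBergeStar (completeEdges (n + 1)) a n := by
  have hpos : 0 < n := by omega
  set y : Fin n → Fin (n + 1) := a.succAbove with hydef
  have yinj : Function.Injective y := Fin.succAbove_right_injective
  have yne : ∀ i, y i ≠ a := fun i => Fin.succAbove_ne a i
  set nx : Fin n → Fin n := fun i => ⟨(i.val + 1) % n, Nat.mod_lt _ hpos⟩ with hnxdef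
  have nx_ne : ∀ i, nx i ≠ i := by
    intro i h
    have hv : (i.val + 1) % n = i.val := congrArg Fin.val h
    rcases lt_or_ge (i.val + 1) n with h' | h'
    · rw [Nat.mod_eq_of_lt h'] at hv; omega
    · have hh : i.val + 1 = n := by omega
      rw [hh, Nat.mod_self] at hv
      omega
  set f : Fin n → Finset (Fin (n + 1)) := fun i => {a, y i, y (nx i)} with hfdef
  have hmemf : ∀ i, a ∈ f i ∧ y i ∈ f i ∧ y (nx i) ∈ f i := by
    intro i
    refine ⟨Finset.mem_insert_self _ _, ?_, ?_⟩
    · exact Finset.mem_insert_of_mem (Finset.mem_insert_self _ _)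
    · exact Finset.mem_insert_of_mem (Finset.mem_insert_of_mem (Finset.mem_singleton_self _))
  have hcard : ∀ i, (f i).card = 3 := by
    intro i
    rw [hfdef]
    rw [Finset.card_insert_of_notMem, Finset.card_insert_of_notMem, Finset.card_singleton]
    · simp only [Finset.mem_singleton]
      exact fun h => nx_ne i (yinj h).symm
    · simp only [Finset.mem_insert, Finset.mem_singleton]
      rintro (h | h) <;> exact (yne _) h.symm
  have hE : ∀ i, f i ∈ completeEdges (n + 1) := by
    intro i
    rw [completeEdges, Finset.mem_powersetCard]
    exact ⟨Finset.subset_univ _, hcard i⟩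
  have hmem_iff : ∀ (i : Fin n) (x : Fin (n + 1)), x ∈ f i ↔ x = a ∨ x = y i ∨ x = y (nx i) := by
    intro i x
    simp [hfdef]
  have finj : Function.Injective f := by
    intro i j hij
    by_contra hne
    have h1 : y i ∈ f j := hij ▸ (hmemf i).2.1
    have h2 : y j ∈ f i := hij ▸ (hmemf j).2.1
    rw [hmem_iff] at h1 h2
    rcases h1 with h1 | h1 | h1
    · exact yne i h1
    · exact hne (yinj h1)
    · rcases h2 with h2 | h2 | h2
      · exact yne j h2
      · exact hne (yinj h2).symm
      · have e1 : i = nx j := yinj h1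
        have e2 : j = nx i := yinj h2
        exact mod_succ_helper hn i.isLt j.isLt
          (congrArg Fin.val e1) (congrArg Fin.val e2)
  refine ⟨y, f, yinj, finj, fun i => ⟨hE i, (hmemf i).1, (hmemf i).2.1, yne i⟩⟩

lemma pull_inl {W : Type} [DecidableEq W] {E : Finset (Finset V)} {F : Finset (Finset W)}
    {a : V} {m : ℕ} (hs : IsBergeStar (sumEdges E F) (Sum.inl a) m) : IsBergeStar E a m := by
  obtain ⟨y, f, hy, hf, hc⟩ := hs
  have hg : ∀ i, ∃ g, g ∈ E ∧ f i = g.map ⟨Sum.inl, Sum.inl_injective⟩ := by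
    intro i
    have h1 := (hc i).1
    rw [sumEdges, Finset.mem_union] at h1
    rcases h1 with h1 | h1
    · obtain ⟨g, hgE, hge⟩ := Finset.mem_image.mp h1
      exact ⟨g, hgE, hge.symm⟩
    · exfalso
      obtain ⟨g, _, hge⟩ := Finset.mem_image.mp h1
      have hm := (hc i).2.1
      rw [← hge, Finset.mem_map] at hm
      obtain ⟨x, _, hx⟩ := hm
      exact Sum.inr_ne_inl hx
  choose g hgE hgf using hg
  have hb : ∀ i, ∃ b, b ∈ g i ∧ Sum.inl b = y i := by
    intro i
    have hm := (hc i).2.2.1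
    rw [hgf i, Finset.mem_map] at hm
    obtain ⟨x, hx1, hx2⟩ := hm
    exact ⟨x, hx1, hx2⟩
  choose b hbg hby using hb
  refine ⟨b, g, ?_, ?_, ?_⟩
  · intro i j hij
    apply hy
    rw [← hby i, ← hby j, hij]
  · intro i j hij
    apply hf
    rw [hgf i, hgf j, hij]
  · intro i
    refine ⟨hgE i, ?_, hbg i, fun h => (hc i).2.2.2 (by rw [← hby i, h])⟩
    have hm := (hc i).2.1
    rw [hgf i, Finset.mem_map] at hm
    obtain ⟨x, hx1, hx2⟩ := hm
    have hxa : x = a := Sum.inl_injective hx2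
    exact hxa ▸ hx1

lemma pull_inr {W : Type} [DecidableEq W] {E : Finset (Finset V)} {F : Finset (Finset W)}
    {a : W} {m : ℕ} (hs : IsBergeStar (sumEdges E F) (Sum.inr a) m) : IsBergeStar F a m := by
  obtain ⟨y, f, hy, hf, hc⟩ := hs
  have hg : ∀ i, ∃ g, g ∈ F ∧ f i = g.map ⟨Sum.inr, Sum.inr_injective⟩ := by
    intro i
    have h1 := (hc i).1
    rw [sumEdges, Finset.mem_union] at h1
    rcases h1 with h1 | h1
    · exfalso
      obtain ⟨g, _, hge⟩ := Finset.mem_image.mp h1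
      have hm := (hc i).2.1
      rw [← hge, Finset.mem_map] at hm
      obtain ⟨x, _, hx⟩ := hm
      exact Sum.inl_ne_inr hx
    · obtain ⟨g, hgE, hge⟩ := Finset.mem_image.mp h1
      exact ⟨g, hgE, hge.symm⟩
  choose g hgE hgf using hg
  have hb : ∀ i, ∃ b, b ∈ g i ∧ Sum.inr b = y i := by
    intro i
    have hm := (hc i).2.2.1
    rw [hgf i, Finset.mem_map] at hm
    obtain ⟨x, hx1, hx2⟩ := hm
    exact ⟨x, hx1, hx2⟩
  choose b hbg hby using hb
  refine ⟨b, g, ?_, ?_, ?_⟩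
  · intro i j hij
    apply hy
    rw [← hby i, ← hby j, hij]
  · intro i j hij
    apply hf
    rw [hgf i, hgf j, hij]
  · intro i
    refine ⟨hgE i, ?_, hbg i, fun h => (hc i).2.2.2 (by rw [← hby i, h])⟩
    have hm := (hc i).2.1
    rw [hgf i, Finset.mem_map] at hm
    obtain ⟨x, hx1, hx2⟩ := hm
    have hxa : x = a := Sum.inr_injective hx2
    exact hxa ▸ hx1

set_option maxHeartbeats 1000000 in
theorem stmt6 (ℓ : ℕ) (hℓ : 5 ≤ ℓ) : Aggressive (completeEdges ℓ) ℓ := by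
  obtain ⟨n, rfl⟩ : ∃ n, ℓ = n + 1 := ⟨ℓ - 1, by omega⟩
  have hn : 4 ≤ n := by omega
  intro W _ _ F _ hFsat
  constructor
  · rintro (a | w) hstar
    · exact no_star_full _ a (pull_inl hstar)
    · exact hFsat.1 w (pull_inr hstar)
  · intro e he heE
    by_cases hL : ∃ a, Sum.inl a ∈ e
    · obtain ⟨a, ha⟩ := hL
      by_cases hR : ∃ b : W, Sum.inr b ∈ e
      · obtain ⟨b, hb⟩ := hR
        refine ⟨Sum.inl a, ?_⟩
        have h1 : IsBergeStar ((completeEdges (n + 1)).image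
            (fun e => e.map (⟨Sum.inl, Sum.inl_injective⟩ : Fin (n+1) ↪ Fin (n+1) ⊕ W)))
            (Sum.inl a) n :=
          star_map (⟨Sum.inl, Sum.inl_injective⟩ : Fin (n+1) ↪ Fin (n+1) ⊕ W)
            (star_complete hn a)
        have hu : ∀ g ∈ (completeEdges (n + 1)).image
            (fun e => e.map (⟨Sum.inl, Sum.inl_injective⟩ : Fin (n+1) ↪ Fin (n+1) ⊕ W)),
            (Sum.inr b : Fin (n+1) ⊕ W) ∉ g := by
          intro g hg hbg
          obtain ⟨g', _, rfl⟩ := Finset.mem_image.mp hg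
          rw [Finset.mem_map] at hbg
          obtain ⟨x, _, hx⟩ := hbg
          exact Sum.inl_ne_inr hx
        have h2 := star_extend h1 hu hb ha (fun h => Sum.inr_ne_inl h)
        refine star_mono (Finset.insert_subset_insert _ ?_) h2
        rw [sumEdges]
        exact Finset.subset_union_left
      · push_neg at hR
        exfalso
        apply heE
        have hsub : e ⊆ Finset.univ.map ⟨Sum.inl, Sum.inl_injective⟩ := by
          intro x hx
          rcases x with a' | b
          · exact Finset.mem_map_of_mem _ (Finset.mem_univ a')
          · exact absurd hx (hR b)
        obtain ⟨u, _, rfl⟩ := Finset.subset_map_iff.mp hsub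
        rw [sumEdges, Finset.mem_union]
        refine Or.inl (Finset.mem_image_of_mem _ ?_)
        rw [completeEdges, Finset.mem_powersetCard]
        exact ⟨Finset.subset_univ _, by rwa [Finset.card_map] at he⟩
    · push_neg at hL
      have hsub : e ⊆ Finset.univ.map ⟨Sum.inr, Sum.inr_injective⟩ := by
        intro x hx
        rcases x with a | b
        · exact absurd hx (hL a)
        · exact Finset.mem_map_of_mem _ (Finset.mem_univ b)
      obtain ⟨u, _, rfl⟩ := Finset.subset_map_iff.mp hsub
      have huF : u ∉ F := by
        intro h
        apply heE
        rw [sumEdges, Finset.mem_union]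
        exact Or.inr (Finset.mem_image_of_mem _ h)
      have hcard : u.card = 3 := by rwa [Finset.card_map] at he
      obtain ⟨w, hw⟩ := hFsat.2 u hcard huF
      refine ⟨Sum.inr w, ?_⟩
      have hmap := star_map (⟨Sum.inr, Sum.inr_injective⟩ : W ↪ Fin (n+1) ⊕ W) hw
      refine star_mono ?_ hmap
      intro x hx
      rw [Finset.mem_image] at hx
      obtain ⟨g, hg, rfl⟩ := hx
      rcases Finset.mem_insert.mp hg with rfl | hgF
      · exact Finset.mem_insert_self _ _
      · refine Finset.mem_insert_of_mem ?_
        rw [sumEdges, Finset.mem_union]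
        exact Or.inr (Finset.mem_image_of_mem _ hgF)
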